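/- For any Φ ∈ ℝ^{d×S} and any symmetric positive definite Ω ∈ ℝ^{S×S} with Tr(Ω) = 1, Tr(Φ Ω^{-1} Φᵀ) ≥ (Tr((ΦᵀΦ)^{1/2}))². -/

import Mathlib

open Matrix

namespace Matrix.PosSemidef

/-- The positive semidefinite square root of a positive semidefinite matrix
(the definition removed from Mathlib, restored with its old meaning). -/
noncomputable def sqrt {n 𝕜 : Type*} [Fintype n] [DecidableEq n] [RCLike 𝕜]
    [PartialOrder 𝕜] [StarOrderedRing 𝕜]
    {A : Matrix n n 𝕜} (hA : PosSemidef A) : Matrix n n 𝕜 :=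
  hA.1.eigenvectorUnitary.1 * diagonal ((↑) ∘ (√·) ∘ hA.1.eigenvalues) *
  (star hA.1.eigenvectorUnitary : Matrix n n 𝕜)

theorem posSemidef_sqrt {n : Type*} [Fintype n] [DecidableEq n]
    {A : Matrix n n ℝ} (hA : PosSemidef A) : PosSemidef hA.sqrt := by
  unfold sqrt
  have hD : (diagonal ((↑) ∘ (√·) ∘ hA.1.eigenvalues) : Matrix n n ℝ).PosSemidef :=
    posSemidef_diagonal_iff.mpr fun i => by simp [Real.sqrt_nonneg]
  exact hD.mul_mul_conjTranspose_same _

theorem sqrt_mul_self {n : Type*} [Fintype n] [DecidableEq n]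
    {A : Matrix n n ℝ} (hA : PosSemidef A) : hA.sqrt * hA.sqrt = A := by
  unfold sqrt
  have hUU : (star hA.1.eigenvectorUnitary : Matrix n n ℝ) * hA.1.eigenvectorUnitary.1 = 1 :=
    Unitary.coe_star_mul_self _
  have hDD : (diagonal ((↑) ∘ (√·) ∘ hA.1.eigenvalues) : Matrix n n ℝ) *
      diagonal ((↑) ∘ (√·) ∘ hA.1.eigenvalues) = diagonal (RCLike.ofReal ∘ hA.1.eigenvalues) := by
    rw [diagonal_mul_diagonal]
    congr 1; ext i
    simp [Real.mul_self_sqrt (hA.eigenvalues_nonneg i)]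
  conv_rhs => rw [hA.1.spectral_theorem]
  rw [Unitary.conjStarAlgAut_apply, ← hDD]
  simp only [Matrix.mul_assoc]
  rw [← Matrix.mul_assoc (star _ : Matrix n n ℝ) _ _, hUU, Matrix.one_mul]
  rfl

end Matrix.PosSemidef

/-- For any `Φ ∈ ℝ^{d×S}` and any symmetric positive definite `Ω` with `Tr(Ω) = 1`,
`Tr(Φ Ω⁻¹ Φᵀ) ≥ (Tr((ΦᵀΦ)^{1/2}))²`. -/
theorem trace_quadratic_ge_sq_trace_sqrt
    (d S : ℕ) (Φ : Matrix (Fin d) (Fin S) ℝ)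
    (Ω : Matrix (Fin S) (Fin S) ℝ) (hΩ : Ω.PosDef) (htr : Ω.trace = 1) :
    ((Matrix.posSemidef_conjTranspose_mul_self Φ).sqrt.trace) ^ 2 ≤
      (Φ * Ω⁻¹ * Φᵀ).trace := by
  set A := (Matrix.posSemidef_conjTranspose_mul_self Φ).sqrt with hAdef
  have hApsd : A.PosSemidef := (Matrix.posSemidef_conjTranspose_mul_self Φ).posSemidef_sqrt
  have hAsym : Aᵀ = A := hApsd.1
  have hAA : A * A = Φᴴ * Φ := (Matrix.posSemidef_conjTranspose_mul_self Φ).sqrt_mul_self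
  set R := hΩ.posSemidef.sqrt with hRdef
  have hRpsd : R.PosSemidef := hΩ.posSemidef.posSemidef_sqrt
  have hRsym : Rᵀ = R := hRpsd.1
  have hRR : R * R = Ω := hΩ.posSemidef.sqrt_mul_self
  -- R is invertible
  have hΩdet : IsUnit Ω.det := isUnit_iff_ne_zero.2 (ne_of_gt hΩ.det_pos)
  have hRdet : IsUnit R.det := by
    have : R.det * R.det = Ω.det := by rw [← det_mul, hRR]
    rcases hΩdet with u
    exact isUnit_iff_ne_zero.2 fun h => (by simpa [h, ← this] using hΩdet.ne_zero)
  have hRinv : R * R⁻¹ = 1 := Matrix.mul_nonsing_inv R hRdet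
  have hΩinv : Ω⁻¹ = R⁻¹ * R⁻¹ := by rw [← hRR, Matrix.mul_inv_rev]
  have hRinvsym : (R⁻¹)ᵀ = R⁻¹ := by rw [Matrix.transpose_nonsing_inv, hRsym]
  set N := R⁻¹ * A with hNdef
  -- trace of A as a bilinear sum
  have htrA : A.trace = ∑ p : Fin S × Fin S, R p.1 p.2 * N p.2 p.1 := by
    have : A = R * N := by rw [hNdef, ← Matrix.mul_assoc, hRinv, Matrix.one_mul]
    rw [this, Matrix.trace, Fintype.sum_prod_type]
    simp [Matrix.mul_apply, Matrix.diag]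
  -- Cauchy–Schwarz
  have hCS := Finset.sum_mul_sq_le_sq_mul_sq Finset.univ
    (fun p : Fin S × Fin S => R p.1 p.2) (fun p : Fin S × Fin S => N p.2 p.1)
  -- first factor is Tr Ω = 1
  have h1 : (∑ p : Fin S × Fin S, R p.1 p.2 ^ 2) = Ω.trace := by
    rw [Fintype.sum_prod_type, ← hRR, Matrix.trace]
    congr 1; ext i
    simp only [Matrix.diag, Matrix.mul_apply]
    congr 1; ext j
    rw [sq]
    congr 1
    exact (congrFun (congrFun hRsym j) i).symm ▸ rfl
  -- second factor is the RHS trace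
  have h2 : (∑ p : Fin S × Fin S, N p.2 p.1 ^ 2) = (Φ * Ω⁻¹ * Φᵀ).trace := by
    have key : (Φ * Ω⁻¹ * Φᵀ).trace = (N * Nᵀ).trace := by
      have hNNt : N * Nᵀ = R⁻¹ * (A * A) * R⁻¹ := by
        rw [hNdef, Matrix.transpose_mul, hAsym, hRinvsym, Matrix.mul_assoc,
          Matrix.mul_assoc, Matrix.mul_assoc]
      rw [hNNt, hAA]
      have hH : Φᴴ = Φᵀ := rfl
      rw [hH]
      calc (Φ * Ω⁻¹ * Φᵀ).trace
          = (Φᵀ * (Φ * Ω⁻¹)).trace := Matrix.trace_mul_comm _ _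
        _ = (Φᵀ * Φ * Ω⁻¹).trace := by rw [Matrix.mul_assoc]
        _ = (Φᵀ * Φ * (R⁻¹ * R⁻¹)).trace := by rw [hΩinv]
        _ = (Φᵀ * Φ * R⁻¹ * R⁻¹).trace := by congr 1; noncomm_ring
        _ = (R⁻¹ * (Φᵀ * Φ * R⁻¹)).trace := (Matrix.trace_mul_comm _ _).symm
        _ = (R⁻¹ * (Φᵀ * Φ) * R⁻¹).trace := by congr 1; noncomm_ring
    rw [key, Fintype.sum_prod_type_right, Matrix.trace]
    congr 1; ext j
    simp [Matrix.diag, Matrix.mul_apply, sq]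
  rw [htrA]
  calc (∑ p : Fin S × Fin S, R p.1 p.2 * N p.2 p.1) ^ 2
      ≤ (∑ p : Fin S × Fin S, R p.1 p.2 ^ 2) * ∑ p : Fin S × Fin S, N p.2 p.1 ^ 2 := hCS
    _ = (Φ * Ω⁻¹ * Φᵀ).trace := by rw [h1, h2, htr, one_mul]
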